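/- arXiv:2407.14511 — 2 statements merged into one kernel-verified Lean document; each statement's English description precedes it below -/
import Mathlib

section
/- For every prime p and integers 1 ≤ a ≤ b, the total number of subgroups of ℤ_{p^a} × ℤ_{p^b} equals ((b-a+1)p^{a+2} - (b-a-1)p^{a+1} - (a+b+3)p + (a+b+1)) / (p-1)². -/
open AddSubgroup QuotientAddGroup

section Goursat
variable {A B : Type*} [AddCommGroup A] [AddCommGroup B]

/-- The subgroup of `A × B` built from `P ≤ A`, `S ≤ B` and a hom `P →+ B ⧸ S`. -/
def goursatMk (P : AddSubgroup A) (S : AddSubgroup B) (φ : P →+ B ⧸ S) :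
    AddSubgroup (A × B) where
  carrier := {z | ∃ h : z.1 ∈ P, φ ⟨z.1, h⟩ = (z.2 : B ⧸ S)}
  zero_mem' := ⟨P.zero_mem, by
    show φ (⟨0, P.zero_mem⟩ : P) = ((0 : B) : B ⧸ S)
    have : (⟨(0 : A), P.zero_mem⟩ : P) = 0 := rfl
    rw [this, map_zero, QuotientAddGroup.mk_zero]⟩
  add_mem' := by
    rintro ⟨x, y⟩ ⟨x', y'⟩ ⟨hx, hφ⟩ ⟨hx', hφ'⟩
    refine ⟨P.add_mem hx hx', ?_⟩
    show φ (⟨x, hx⟩ + ⟨x', hx'⟩) = ((y + y' : B) : B ⧸ S)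
    rw [map_add, hφ, hφ', QuotientAddGroup.mk_add]
  neg_mem' := by
    rintro ⟨x, y⟩ ⟨hx, hφ⟩
    refine ⟨P.neg_mem hx, ?_⟩
    show φ (-⟨x, hx⟩) = ((-y : B) : B ⧸ S)
    rw [map_neg, hφ, QuotientAddGroup.mk_neg]

lemma mem_goursatMk {P : AddSubgroup A} {S : AddSubgroup B} {φ : P →+ B ⧸ S} {z : A × B} :
    z ∈ goursatMk P S φ ↔ ∃ h : z.1 ∈ P, φ ⟨z.1, h⟩ = (z.2 : B ⧸ S) := Iff.rfl

variable (H : AddSubgroup (A × B))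

/-- First projection of `H`. -/
def gFst : AddSubgroup A := H.map (AddMonoidHom.fst A B)

/-- Second-factor kernel of `H`. -/
def gSnd : AddSubgroup B := H.comap (AddMonoidHom.inr A B)

lemma mem_gFst {x : A} : x ∈ gFst H ↔ ∃ y, (x, y) ∈ H := by
  constructor
  · rintro ⟨⟨x', y⟩, hz, rfl⟩; exact ⟨y, hz⟩
  · rintro ⟨y, hy⟩; exact ⟨(x, y), hy, rfl⟩

lemma mem_gSnd {y : B} : y ∈ gSnd H ↔ (0, y) ∈ H := Iff.rfl

lemma goursat_well_def {x : A} {y y' : B} (h : (x, y) ∈ H) (h' : (x, y') ∈ H) :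
    (y : B ⧸ gSnd H) = (y' : B ⧸ gSnd H) := by
  rw [QuotientAddGroup.eq_iff_sub_mem]
  have hmem : ((x, y) - (x, y') : A × B) ∈ H := H.sub_mem h h'
  have : ((x, y) - (x, y') : A × B) = (0, y - y') := by simp [Prod.ext_iff]
  rw [this] at hmem
  exact hmem

noncomputable def gHom : gFst H →+ B ⧸ gSnd H where
  toFun x := ((Classical.choose ((mem_gFst H).mp x.2) : B) : B ⧸ gSnd H)
  map_zero' := by
    have h0 := Classical.choose_spec ((mem_gFst H).mp (gFst H).zero_mem)
    have hz : ((0 : A), (0 : B)) ∈ H := H.zero_mem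
    have := goursat_well_def H h0 hz
    simpa using this
  map_add' := by
    rintro ⟨x, hx⟩ ⟨x', hx'⟩
    have h1 := Classical.choose_spec ((mem_gFst H).mp hx)
    have h2 := Classical.choose_spec ((mem_gFst H).mp hx')
    have h3 := Classical.choose_spec ((mem_gFst H).mp ((gFst H).add_mem hx hx'))
    have h12 : (x + x', Classical.choose ((mem_gFst H).mp hx) +
        Classical.choose ((mem_gFst H).mp hx')) ∈ H := by
      have := H.add_mem h1 h2
      simpa [Prod.ext_iff] using this
    have key := goursat_well_def H h3 h12
    show ((Classical.choose ((mem_gFst H).mp ((gFst H).add_mem hx hx')) : B) : B ⧸ gSnd H) = _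
    rw [key, QuotientAddGroup.mk_add]

lemma gHom_spec {x : A} {y : B} (h : (x, y) ∈ H) (hx : x ∈ gFst H) :
    gHom H ⟨x, hx⟩ = (y : B ⧸ gSnd H) :=
  goursat_well_def H (Classical.choose_spec ((mem_gFst H).mp hx)) h

lemma goursat_sigma_ext {P P' : AddSubgroup A} {S S' : AddSubgroup B}
    (hP : P = P') (hS : S = S') {φ : P →+ B ⧸ S} {φ' : P' →+ B ⧸ S'}
    (h : ∀ (x : A) (hx : x ∈ P) (hx' : x ∈ P') (y : B),
      φ ⟨x, hx⟩ = (y : B ⧸ S) → φ' ⟨x, hx'⟩ = (y : B ⧸ S')) :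
    (⟨P, S, φ⟩ : Σ (P : AddSubgroup A) (S : AddSubgroup B), P →+ B ⧸ S) = ⟨P', S', φ'⟩ := by
  subst hP; subst hS
  obtain rfl : φ = φ' := by
    ext z
    obtain ⟨x, hx⟩ := z
    obtain ⟨y, hy⟩ := QuotientAddGroup.mk_surjective (φ ⟨x, hx⟩)
    rw [← hy]
    exact (h x hx hx y hy.symm).symm
  rfl

noncomputable def goursatEquiv (A B : Type*) [AddCommGroup A] [AddCommGroup B] :
    AddSubgroup (A × B) ≃ Σ (P : AddSubgroup A) (S : AddSubgroup B), P →+ B ⧸ S where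
  toFun H := ⟨gFst H, gSnd H, gHom H⟩
  invFun t := goursatMk t.1 t.2.1 t.2.2
  left_inv H := by
    ext ⟨x, y⟩
    rw [mem_goursatMk]
    constructor
    · rintro ⟨hx, hφ⟩
      obtain ⟨y', hy'⟩ := (mem_gFst H).mp hx
      rw [gHom_spec H hy' hx, QuotientAddGroup.eq_iff_sub_mem] at hφ
      have h2 : ((0 : A), y' - y) ∈ H := hφ
      have := H.sub_mem hy' h2
      simpa using this
    · intro h
      exact ⟨(mem_gFst H).mpr ⟨y, h⟩, gHom_spec H h _⟩
  right_inv := by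
    rintro ⟨P, S, φ⟩
    have hP : gFst (goursatMk P S φ) = P := by
      ext x
      rw [mem_gFst]
      constructor
      · rintro ⟨y, hy, -⟩; exact hy
      · intro hx
        obtain ⟨y, hy⟩ := QuotientAddGroup.mk_surjective (φ ⟨x, hx⟩)
        exact ⟨y, hx, hy.symm⟩
    have hS : gSnd (goursatMk P S φ) = S := by
      ext y
      rw [mem_gSnd, mem_goursatMk]
      constructor
      · rintro ⟨h, hφ⟩
        have h0 : (⟨(0 : A), h⟩ : P) = 0 := rfl
        rw [h0, map_zero] at hφ
        rw [← QuotientAddGroup.eq_zero_iff]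
        exact hφ.symm
      · intro hy
        refine ⟨P.zero_mem, ?_⟩
        have h0 : (⟨(0 : A), P.zero_mem⟩ : P) = 0 := rfl
        rw [h0, map_zero]
        exact ((QuotientAddGroup.eq_zero_iff y).mpr hy).symm
    exact (goursat_sigma_ext hP.symm hS.symm fun x hx hx' y hy =>
      gHom_spec _ (mem_goursatMk.mpr ⟨hx, hy⟩) hx').symm
end Goursat

lemma mulLeft_apply' {R : Type*} [NonUnitalNonAssocSemiring R] (a b : R) :
    AddMonoidHom.mulLeft a b = a * b := rfl

lemma range_mulLeft (n c : ℕ) :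
    (AddMonoidHom.mulLeft ((c : ZMod n))).range = zmultiples ((c : ZMod n)) := by
  ext x
  constructor
  · rintro ⟨y, rfl⟩
    refine ⟨(y.cast : ℤ), ?_⟩
    show (y.cast : ℤ) • (c : ZMod n) = AddMonoidHom.mulLeft _ y
    rw [mulLeft_apply', zsmul_eq_mul, mul_comm]
    congr 1
    exact ZMod.intCast_zmod_cast y
  · rintro ⟨k, rfl⟩
    refine ⟨(k : ZMod n), ?_⟩
    show (c : ZMod n) * (k : ZMod n) = k • (c : ZMod n)
    rw [zsmul_eq_mul, mul_comm]

lemma card_ker_mulLeft (n c : ℕ) (hn : n ≠ 0) :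
    Nat.card (AddMonoidHom.mulLeft ((c : ZMod n))).ker = n.gcd c := by
  have h1 : Nat.card (ZMod n) =
      Nat.card (ZMod n ⧸ (AddMonoidHom.mulLeft ((c : ZMod n))).ker) *
        Nat.card (AddMonoidHom.mulLeft ((c : ZMod n))).ker :=
    AddSubgroup.card_eq_card_quotient_mul_card_addSubgroup _
  have h2 : Nat.card (ZMod n ⧸ (AddMonoidHom.mulLeft ((c : ZMod n))).ker) =
      Nat.card (AddMonoidHom.mulLeft ((c : ZMod n))).range :=
    Nat.card_congr (QuotientAddGroup.quotientKerEquivRange _).toEquiv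
  rw [h2, range_mulLeft, Nat.card_zmultiples, ZMod.addOrderOf_coe c hn, Nat.card_zmod] at h1
  set g := n.gcd c with hg
  have hgdvd : g ∣ n := Nat.gcd_dvd_left n c
  have hgpos : 0 < g := Nat.gcd_pos_of_pos_left c (Nat.pos_of_ne_zero hn)
  have hq : n / g ≠ 0 := Nat.div_ne_zero_iff_of_dvd hgdvd |>.mpr ⟨hn, hgpos.ne'⟩
  have h3 : n / g * g = n := Nat.div_mul_cancel hgdvd
  have h4 : n / g * Nat.card (AddMonoidHom.mulLeft ((c : ZMod n))).ker = n / g * g := by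
    rw [h3, ← h1]
  exact Nat.eq_of_mul_eq_mul_left (Nat.pos_of_ne_zero hq) h4

lemma lift_one {c : ℕ} {A : Type*} [AddGroup A] (f : {f : ℤ →+ A // f c = 0}) :
    ZMod.lift c f 1 = f.1 1 := by
  have := ZMod.lift_coe c f (1 : ℤ)
  simpa using this

/-- Homs out of `ZMod c` are classified by elements killed by `c`. -/
noncomputable def homZModEquiv (c : ℕ) [NeZero c] (A : Type*) [AddCommGroup A] :
    (ZMod c →+ A) ≃ {x : A // c • x = 0} where
  toFun f := ⟨f 1, by
    rw [← map_nsmul]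
    convert f.map_zero using 2
    rw [nsmul_eq_mul, mul_one, ZMod.natCast_self]⟩
  invFun x := ZMod.lift c ⟨zmultiplesHom A x.1, by
    simpa using x.2⟩
  left_inv f := by
    ext z
    have hz : z = z.val • (1 : ZMod c) := by
      rw [nsmul_eq_mul, mul_one, ZMod.natCast_rightInverse z]
    rw [hz, map_nsmul, map_nsmul]
    congr 1
    rw [lift_one]
    simp
  right_inv x := by
    ext
    show ZMod.lift c _ 1 = _
    rw [lift_one]
    simp

lemma card_hom_zmod (c e : ℕ) (hc : c ≠ 0) (he : e ≠ 0) :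
    Nat.card (ZMod c →+ ZMod e) = c.gcd e := by
  haveI : NeZero c := ⟨hc⟩
  rw [Nat.card_congr (homZModEquiv c (ZMod e))]
  have h : ∀ x : ZMod e, c • x = 0 ↔ x ∈ (AddMonoidHom.mulLeft ((c : ZMod e))).ker := by
    intro x
    rw [AddMonoidHom.mem_ker, mulLeft_apply', nsmul_eq_mul]
  rw [Nat.card_congr (Equiv.subtypeEquivRight h), Nat.gcd_comm]
  exact card_ker_mulLeft e c he

lemma card_hom_cyclic (G H : Type*) [AddCommGroup G] [AddCommGroup H] [Finite G] [Finite H]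
    (hG : IsAddCyclic G) (hH : IsAddCyclic H) :
    Nat.card (G →+ H) = (Nat.card G).gcd (Nat.card H) := by
  have e1 := zmodAddCyclicAddEquiv hG
  have e2 := zmodAddCyclicAddEquiv hH
  have e3 : (G →+ H) ≃ (ZMod (Nat.card G) →+ ZMod (Nat.card H)) :=
    { toFun := fun f => (e2.symm.toAddMonoidHom.comp f).comp e1.toAddMonoidHom
      invFun := fun f => (e2.toAddMonoidHom.comp f).comp e1.symm.toAddMonoidHom
      left_inv := fun f => by ext x; simp
      right_inv := fun f => by ext x; simp }
  rw [Nat.card_congr e3]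
  exact card_hom_zmod _ _ Nat.card_pos.ne' Nat.card_pos.ne'


-- subgroup with given card
noncomputable section

lemma card_dvd (n : ℕ) (H : AddSubgroup (ZMod n)) : Nat.card H ∣ n := by
  have := AddSubgroup.card_addSubgroup_dvd_card H
  rwa [Nat.card_zmod] at this

lemma le_ker (n : ℕ) (H : AddSubgroup (ZMod n)) :
    H ≤ (AddMonoidHom.mulLeft ((Nat.card H : ℕ) : ZMod n)).ker := by
  intro x hx
  rw [AddMonoidHom.mem_ker, mulLeft_apply', ← nsmul_eq_mul]
  have h : (Nat.card H) • (⟨x, hx⟩ : H) = 0 := card_nsmul_eq_zero'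
  have h2 : ((Nat.card H • (⟨x, hx⟩ : H) : H) : ZMod n) = 0 := by rw [h]; rfl
  push_cast at h2
  exact h2

lemma subgroup_eq_ker (n : ℕ) (hn : n ≠ 0) (H : AddSubgroup (ZMod n)) :
    H = (AddMonoidHom.mulLeft ((Nat.card H : ℕ) : ZMod n)).ker := by
  haveI : NeZero n := ⟨hn⟩
  have hle := le_ker n H
  have hcard : Nat.card (AddMonoidHom.mulLeft ((Nat.card H : ℕ) : ZMod n)).ker = Nat.card H := by
    rw [card_ker_mulLeft n _ hn, Nat.gcd_eq_right (card_dvd n H)]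
  exact AddSubgroup.eq_of_le_of_card_ge hle hcard.le

lemma card_ker_eq (n : ℕ) (hn : n ≠ 0) (c : ℕ) (hc : c ∣ n) :
    Nat.card (AddMonoidHom.mulLeft ((c : ZMod n))).ker = c := by
  rw [card_ker_mulLeft n c hn, Nat.gcd_eq_right hc]

/-- Subgroups of `ZMod n` are in bijection with the divisors of `n`. -/
def subgroupEquivDivisors (n : ℕ) (hn : n ≠ 0) :
    {d : ℕ // d ∈ n.divisors} ≃ AddSubgroup (ZMod n) where
  toFun d := (AddMonoidHom.mulLeft ((d.1 : ZMod n))).ker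
  invFun H := ⟨Nat.card H, Nat.mem_divisors.mpr ⟨card_dvd n H, hn⟩⟩
  left_inv d := by
    ext
    exact card_ker_eq n hn d.1 (Nat.mem_divisors.mp d.2).1
  right_inv H := (subgroup_eq_ker n hn H).symm

lemma card_subgroupEquivDivisors (n : ℕ) (hn : n ≠ 0) (d : {d : ℕ // d ∈ n.divisors}) :
    Nat.card (subgroupEquivDivisors n hn d) = d.1 :=
  card_ker_eq n hn d.1 (Nat.mem_divisors.mp d.2).1

-- finiteness / cyclic instances
example (n : ℕ) [NeZero n] : Finite (AddSubgroup (ZMod n)) := inferInstance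
example (n : ℕ) [NeZero n] (H : AddSubgroup (ZMod n)) : IsAddCyclic H := inferInstance
example (n : ℕ) [NeZero n] (H : AddSubgroup (ZMod n)) : IsAddCyclic (ZMod n ⧸ H) :=
  isAddCyclic_of_surjective (QuotientAddGroup.mk' H) (QuotientAddGroup.mk'_surjective H)
example (n : ℕ) [NeZero n] (H : AddSubgroup (ZMod n)) (P : AddSubgroup (ZMod n)) :
    Finite (P →+ ZMod n ⧸ H) :=
  Finite.of_injective _ DFunLike.coe_injective

lemma Nat.card_sigma' {ι : Type*} [Fintype ι] (β : ι → Type*) [∀ i, Finite (β i)] :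
    Nat.card (Σ i, β i) = ∑ i, Nat.card (β i) := by
  letI : ∀ i, Fintype (β i) := fun i => Fintype.ofFinite _
  simp [Nat.card_eq_fintype_card, Fintype.card_sigma]

lemma card_quotient (n : ℕ) (hn : n ≠ 0) (H : AddSubgroup (ZMod n)) :
    Nat.card (ZMod n ⧸ H) = n / Nat.card H := by
  haveI : NeZero n := ⟨hn⟩
  have h := AddSubgroup.card_eq_card_quotient_mul_card_addSubgroup H
  rw [Nat.card_zmod] at h
  exact (Nat.div_eq_of_eq_mul_left Nat.card_pos h).symm


lemma stageB (q B : ℚ) (hq : q ≠ 1) (a : ℕ) :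
    ∑ i ∈ Finset.range (a+1), ((q^i - 1)/(q-1) + (B + 1 - i)*q^i)
      = ((B - a + 1)*q^(a+2) - (B - a - 1)*q^(a+1) - (a+B+3)*q + (a+B+1)) / (q-1)^2 := by
  have hq' : q - 1 ≠ 0 := sub_ne_zero.mpr hq
  induction a with
  | zero => rw [Finset.sum_range_one]; push_cast; field_simp; ring
  | succ a ih =>
    rw [Finset.sum_range_succ, ih]
    push_cast
    field_simp
    ring

lemma stageA (q : ℚ) (hq : q ≠ 1) (a b : ℕ) (hab : a ≤ b) :
    ∑ i ∈ Finset.range (a+1), ∑ j ∈ Finset.range (b+1), q^(min i j)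
      = ∑ i ∈ Finset.range (a+1), ((q^i - 1)/(q-1) + ((b:ℚ) + 1 - i)*q^i) := by
  apply Finset.sum_congr rfl
  intro i hi
  have hib : i ≤ b := le_trans (Nat.lt_succ_iff.mp (Finset.mem_range.mp hi)) hab
  rw [Finset.range_eq_Ico, ← Finset.sum_Ico_consecutive _ (Nat.zero_le i) (by omega : i ≤ b+1)]
  have h1 : ∑ j ∈ Finset.Ico 0 i, q^(min i j) = ∑ j ∈ Finset.range i, q^j := by
    rw [← Finset.range_eq_Ico]
    exact Finset.sum_congr rfl fun j hj => by
      rw [min_eq_right (le_of_lt (Finset.mem_range.mp hj))]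
  have h2 : ∑ j ∈ Finset.Ico i (b+1), q^(min i j) = ((b+1-i : ℕ) : ℚ) * q^i := by
    rw [Finset.sum_congr rfl fun j hj => by rw [min_eq_left (Finset.mem_Ico.mp hj).1],
      Finset.sum_const, Nat.card_Ico, nsmul_eq_mul]
  rw [h1, h2, geom_sum_eq hq]
  push_cast [Nat.cast_sub (by omega : i ≤ b+1)]
  ring

lemma pow_gcd_pow (p i j : ℕ) (hp : 0 < p) : Nat.gcd (p^i) (p^j) = p^(min i j) := by
  rcases le_total i j with h | h
  · rw [Nat.gcd_eq_left (pow_dvd_pow p h), min_eq_left h]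
  · rw [Nat.gcd_eq_right (pow_dvd_pow p h), min_eq_right h]

section Main

lemma sum_subgroups {M : Type*} [AddCommMonoid M] (n : ℕ) (hn : n ≠ 0) (F : ℕ → M)
    [Fintype (AddSubgroup (ZMod n))] :
    ∑ P : AddSubgroup (ZMod n), F (Nat.card P) = ∑ c ∈ n.divisors, F c := by
  rw [← Finset.sum_coe_sort n.divisors F]
  exact (Fintype.sum_equiv (subgroupEquivDivisors n hn) _ _
    (fun d => by rw [card_subgroupEquivDivisors n hn d])).symm

theorem count_main (n m : ℕ) (hn : n ≠ 0) (hm : m ≠ 0) :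
    Nat.card (AddSubgroup (ZMod n × ZMod m)) =
      ∑ c ∈ n.divisors, ∑ d ∈ m.divisors, Nat.gcd c (m / d) := by
  haveI : NeZero n := ⟨hn⟩
  haveI : NeZero m := ⟨hm⟩
  rw [Nat.card_congr (goursatEquiv (ZMod n) (ZMod m))]
  letI : Fintype (AddSubgroup (ZMod n)) := Fintype.ofFinite _
  letI : Fintype (AddSubgroup (ZMod m)) := Fintype.ofFinite _
  haveI hfinhom : ∀ (P : AddSubgroup (ZMod n)) (S : AddSubgroup (ZMod m)),
      Finite (P →+ ZMod m ⧸ S) := fun P S => Finite.of_injective _ DFunLike.coe_injective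
  rw [Nat.card_sigma']
  have step1 : ∀ P : AddSubgroup (ZMod n),
      Nat.card (Σ S : AddSubgroup (ZMod m), P →+ ZMod m ⧸ S) =
        ∑ S : AddSubgroup (ZMod m), Nat.card (P →+ ZMod m ⧸ S) := fun P =>
    Nat.card_sigma' _
  have step2 : ∀ (P : AddSubgroup (ZMod n)) (S : AddSubgroup (ZMod m)),
      Nat.card (P →+ ZMod m ⧸ S) = Nat.gcd (Nat.card P) (m / Nat.card S) := by
    intro P S
    rw [card_hom_cyclic _ _ inferInstance
      (isAddCyclic_of_surjective (QuotientAddGroup.mk' S) (QuotientAddGroup.mk'_surjective S)),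
      card_quotient m hm S]
  calc ∑ P : AddSubgroup (ZMod n), Nat.card (Σ S : AddSubgroup (ZMod m), P →+ ZMod m ⧸ S)
      = ∑ P : AddSubgroup (ZMod n), ∑ S : AddSubgroup (ZMod m),
          Nat.gcd (Nat.card P) (m / Nat.card S) := by
        refine Finset.sum_congr rfl fun P _ => ?_
        rw [step1 P]
        exact Finset.sum_congr rfl fun S _ => step2 P S
    _ = ∑ P : AddSubgroup (ZMod n), ∑ d ∈ m.divisors, Nat.gcd (Nat.card P) (m / d) := by
        refine Finset.sum_congr rfl fun P _ => ?_
        exact sum_subgroups m hm (fun d => Nat.gcd (Nat.card P) (m / d))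
    _ = ∑ c ∈ n.divisors, ∑ d ∈ m.divisors, Nat.gcd c (m / d) :=
        sum_subgroups n hn (fun c => ∑ d ∈ m.divisors, Nat.gcd c (m / d))

theorem count_prime_pow (p : ℕ) (hp : p.Prime) (a b : ℕ) :
    Nat.card (AddSubgroup (ZMod (p ^ a) × ZMod (p ^ b))) =
      ∑ i ∈ Finset.range (a+1), ∑ j ∈ Finset.range (b+1), p ^ (min i j) := by
  rw [count_main (p^a) (p^b) (pow_ne_zero a hp.pos.ne') (pow_ne_zero b hp.pos.ne')]
  have inner : ∀ c : ℕ, ∑ d ∈ (p^b).divisors, Nat.gcd c (p^b / d)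
      = ∑ d ∈ (p^b).divisors, Nat.gcd c d := fun c =>
    Nat.sum_div_divisors (p^b) (Nat.gcd c)
  rw [Finset.sum_congr rfl fun c _ => inner c]
  rw [Nat.divisors_prime_pow hp a, Nat.divisors_prime_pow hp b,
    Finset.sum_map, Finset.sum_congr rfl fun i _ => Finset.sum_map _ _ _]
  exact Finset.sum_congr rfl fun i _ => Finset.sum_congr rfl fun j _ => by
    simpa using pow_gcd_pow p i j hp.pos

end Main

theorem subgroup_count_prime_powers (p : ℕ) (hp : p.Prime) (a b : ℕ)
    (ha : 1 ≤ a) (hab : a ≤ b) :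
    (Nat.card (AddSubgroup (ZMod (p ^ a) × ZMod (p ^ b))) : ℚ) =
      (((b : ℚ) - a + 1) * p ^ (a + 2) - ((b : ℚ) - a - 1) * p ^ (a + 1)
          - ((a : ℚ) + b + 3) * p + ((a : ℚ) + b + 1)) / ((p : ℚ) - 1) ^ 2 := by
  have hq : ((p : ℚ)) ≠ 1 := by
    have := hp.two_le
    intro h
    have : (p : ℚ) ≥ 2 := by exact_mod_cast this
    rw [h] at this
    norm_num at this
  rw [count_prime_pow p hp a b]
  push_cast
  rw [stageA (p : ℚ) hq a b hab, stageB (p : ℚ) (b : ℚ) hq a]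
end
end

section
/- For positive integers m, n, δ with δ ∣ mn, the number of subgroups of order δ of ℤ_m × ℤ_n equals Σ φ(ij/δ), where the sum runs over pairs (i, j) with i ∣ gcd(m, δ), j ∣ gcd(n, δ), and δ ∣ ij. -/
open AddSubgroup Finset Function

section Goursat

variable {G K : Type*} [AddCommGroup G] [AddCommGroup K]

/-- The subgroup of `G × K` associated to a triple `(A, N, φ)`. -/
def triSubgroup (A : AddSubgroup G) (N : AddSubgroup K) (φ : A →+ K ⧸ N) :
    AddSubgroup (G × K) where
  carrier := {x | ∃ h : x.1 ∈ A, (x.2 : K ⧸ N) = φ ⟨x.1, h⟩}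
  zero_mem' := ⟨A.zero_mem, by
    rw [show (⟨(0 : G × K).1, A.zero_mem⟩ : A) = 0 from rfl, map_zero]; rfl⟩
  add_mem' := by
    rintro ⟨a, b⟩ ⟨c, d⟩ ⟨ha, hb⟩ ⟨hc, hd⟩
    refine ⟨add_mem ha hc, ?_⟩
    rw [show (⟨((a, b) + (c, d) : G × K).1, add_mem ha hc⟩ : A) = ⟨a, ha⟩ + ⟨c, hc⟩ from rfl,
      map_add, ← hb, ← hd]
    rfl
  neg_mem' := by
    rintro ⟨a, b⟩ ⟨ha, hb⟩
    refine ⟨neg_mem ha, ?_⟩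
    rw [show (⟨(-(a, b) : G × K).1, neg_mem ha⟩ : A) = -⟨a, ha⟩ from rfl, map_neg, ← hb]
    rfl

lemma mem_triSubgroup_iff {A : AddSubgroup G} {N : AddSubgroup K} {φ : A →+ K ⧸ N} {x : G × K} :
    x ∈ triSubgroup A N φ ↔ ∃ h : x.1 ∈ A, (x.2 : K ⧸ N) = φ ⟨x.1, h⟩ := Iff.rfl

lemma map_fst_triSubgroup (A : AddSubgroup G) (N : AddSubgroup K) (φ : A →+ K ⧸ N) :
    (triSubgroup A N φ).map (AddMonoidHom.fst G K) = A := by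
  ext a
  constructor
  · rintro ⟨⟨a', b⟩, ⟨ha, -⟩, rfl⟩
    exact ha
  · intro ha
    obtain ⟨b, hb⟩ := QuotientAddGroup.mk'_surjective N (φ ⟨a, ha⟩)
    exact ⟨(a, b), ⟨ha, hb⟩, rfl⟩

lemma goursatSnd_triSubgroup (A : AddSubgroup G) (N : AddSubgroup K) (φ : A →+ K ⧸ N) :
    (triSubgroup A N φ).goursatSnd = N := by
  ext b
  rw [AddSubgroup.mem_goursatSnd]
  constructor
  · rintro ⟨h0, hb⟩
    rw [show (⟨((0 : G), b).1, h0⟩ : A) = 0 from Subtype.ext rfl, map_zero] at hb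
    exact (QuotientAddGroup.eq_zero_iff b).mp hb
  · intro hb
    refine ⟨A.zero_mem, ?_⟩
    rw [show (⟨((0 : G), b).1, A.zero_mem⟩ : A) = 0 from Subtype.ext rfl, map_zero]
    exact (QuotientAddGroup.eq_zero_iff b).mpr hb

lemma triSubgroup_phi_eq {A : AddSubgroup G} {N : AddSubgroup K} {φ ψ : A →+ K ⧸ N}
    (h : triSubgroup A N φ = triSubgroup A N ψ) : φ = ψ := by
  ext a
  obtain ⟨b, hb⟩ := QuotientAddGroup.mk'_surjective N (φ a)
  have h1 : ((a : G), b) ∈ triSubgroup A N φ := ⟨a.2, by simpa using hb⟩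
  rw [h] at h1
  obtain ⟨ha', hb'⟩ := h1
  rw [← hb]
  exact hb'

variable (H : AddSubgroup (G × K))

/-- The projection `H → A` onto the first factor. -/
noncomputable def gP : H →+ H.map (AddMonoidHom.fst G K) :=
  (AddMonoidHom.fst G K).addSubgroupMap H

lemma gP_surjective : Surjective (gP H) :=
  (AddMonoidHom.fst G K).addSubgroupMap_surjective H

/-- The map `H → K ⧸ goursatSnd H`. -/
noncomputable def gQ : H →+ K ⧸ H.goursatSnd :=
  (QuotientAddGroup.mk' H.goursatSnd).comp ((AddMonoidHom.snd G K).comp H.subtype)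

lemma gker : ∀ x ∈ (gP H).ker, gQ H x = 0 := by
  rintro ⟨⟨a, b⟩, hab⟩ hk
  have ha : a = 0 := congrArg Subtype.val hk
  subst ha
  have : b ∈ H.goursatSnd := AddSubgroup.mem_goursatSnd.mpr hab
  exact (QuotientAddGroup.eq_zero_iff b).mpr this

/-- The homomorphism `A →+ K ⧸ N` associated to a subgroup `H ≤ G × K`. -/
noncomputable def gPhi : (H.map (AddMonoidHom.fst G K)) →+ K ⧸ H.goursatSnd :=
  (QuotientAddGroup.lift (gP H).ker (gQ H) (gker H)).comp
    ((QuotientAddGroup.quotientKerEquivOfSurjective (gP H) (gP_surjective H)).symm :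
      (H.map (AddMonoidHom.fst G K)) ≃+ H ⧸ (gP H).ker).toAddMonoidHom

lemma gPhi_apply {x : G × K} (hx : x ∈ H) (h1 : x.1 ∈ H.map (AddMonoidHom.fst G K)) :
    gPhi H ⟨x.1, h1⟩ = (x.2 : K ⧸ H.goursatSnd) := by
  have he : (QuotientAddGroup.quotientKerEquivOfSurjective (gP H) (gP_surjective H))
      (QuotientAddGroup.mk (⟨x, hx⟩ : H)) = gP H ⟨x, hx⟩ := rfl
  have h2 : (⟨x.1, h1⟩ : H.map (AddMonoidHom.fst G K)) = gP H ⟨x, hx⟩ := Subtype.ext rfl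
  rw [gPhi]
  simp only [AddMonoidHom.coe_comp, AddEquiv.coe_toAddMonoidHom, comp_apply]
  rw [h2, ← he, AddEquiv.symm_apply_apply]
  rfl

lemma triSubgroup_gPhi : triSubgroup (H.map (AddMonoidHom.fst G K)) H.goursatSnd (gPhi H) = H := by
  ext x
  obtain ⟨a, b⟩ := x
  constructor
  · rintro ⟨⟨⟨a', b'⟩, hab', (rfl : a' = a)⟩, hb⟩
    replace hb : ((a', b).2 : K ⧸ H.goursatSnd) = ((a', b').2 : K ⧸ H.goursatSnd) :=
      hb.trans (gPhi_apply H hab' ⟨_, hab', rfl⟩)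
    have hmem : ((0 : G), b - b') ∈ H := by
      refine AddSubgroup.mem_goursatSnd.mp ?_
      rwa [QuotientAddGroup.eq_iff_sub_mem] at hb
    have := H.add_mem hab' hmem
    simpa using this
  · intro hab
    exact ⟨⟨(a, b), hab, rfl⟩, (gPhi_apply H hab _).symm⟩

/-- The projection `triSubgroup A N φ → A`. -/
noncomputable def triP (A : AddSubgroup G) (N : AddSubgroup K) (φ : A →+ K ⧸ N) :
    triSubgroup A N φ →+ A where
  toFun x := ⟨x.1.1, x.2.choose⟩
  map_zero' := rfl
  map_add' _ _ := rfl

lemma triP_surjective (A : AddSubgroup G) (N : AddSubgroup K) (φ : A →+ K ⧸ N) :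
    Surjective (triP A N φ) := by
  rintro ⟨a, ha⟩
  obtain ⟨b, hb⟩ := QuotientAddGroup.mk'_surjective N (φ ⟨a, ha⟩)
  exact ⟨⟨(a, b), ha, hb⟩, Subtype.ext rfl⟩

/-- The kernel of the projection is equivalent to `N`. -/
noncomputable def triKerEquiv (A : AddSubgroup G) (N : AddSubgroup K) (φ : A →+ K ⧸ N) :
    (triP A N φ).ker ≃ N where
  toFun x := ⟨x.1.1.2, by
    obtain ⟨h, hb⟩ := x.1.2
    have ha : x.1.1.1 = 0 := congrArg Subtype.val x.2
    rw [show (⟨x.1.1.1, h⟩ : A) = 0 from Subtype.ext ha, map_zero] at hb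
    exact (QuotientAddGroup.eq_zero_iff _).mp hb⟩
  invFun b := ⟨⟨((0 : G), b.1), A.zero_mem, by
      rw [show (⟨(((0 : G), b.1) : G × K).1, A.zero_mem⟩ : A) = 0 from Subtype.ext rfl, map_zero]
      exact (QuotientAddGroup.eq_zero_iff _).mpr b.2⟩,
    Subtype.ext rfl⟩
  left_inv x := by
    have ha : x.1.1.1 = 0 := congrArg Subtype.val x.2
    exact Subtype.ext (Subtype.ext (Prod.ext ha.symm rfl))
  right_inv b := rfl

lemma card_triSubgroup [Finite G] [Finite K] (A : AddSubgroup G) (N : AddSubgroup K)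
    (φ : A →+ K ⧸ N) :
    Nat.card (triSubgroup A N φ) = Nat.card A * Nat.card N := by
  calc Nat.card (triSubgroup A N φ)
      = Nat.card (triSubgroup A N φ ⧸ (triP A N φ).ker) * Nat.card (triP A N φ).ker :=
        AddSubgroup.card_eq_card_quotient_mul_card_addSubgroup _
    _ = Nat.card A * Nat.card N := by
        rw [Nat.card_congr (QuotientAddGroup.quotientKerEquivOfSurjective (triP A N φ)
          (triP_surjective A N φ)).toEquiv, Nat.card_congr (triKerEquiv A N φ)]

lemma card_subgroup_count [Finite G] [Finite K] (δ : ℕ) :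
    Nat.card {H : AddSubgroup (G × K) // Nat.card H = δ} =
      Nat.card (Σ p : {p : AddSubgroup G × AddSubgroup K // Nat.card p.1 * Nat.card p.2 = δ},
        ((p : AddSubgroup G × AddSubgroup K).1 →+ K ⧸ (p : AddSubgroup G × AddSubgroup K).2)) := by
  refine (Nat.card_eq_of_bijective
    (fun t => ⟨triSubgroup t.1.1.1 t.1.1.2 t.2, by rw [card_triSubgroup]; exact t.1.2⟩) ⟨?_, ?_⟩).symm
  · rintro ⟨⟨⟨A, N⟩, hp⟩, φ⟩ ⟨⟨⟨A', N'⟩, hp'⟩, φ'⟩ h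
    simp only [Subtype.mk.injEq] at h
    obtain rfl : A = A' := by
      rw [← map_fst_triSubgroup A N φ, h, map_fst_triSubgroup]
    obtain rfl : N = N' := by
      rw [← goursatSnd_triSubgroup A N φ, h, goursatSnd_triSubgroup]
    obtain rfl : φ = φ' := triSubgroup_phi_eq h
    rfl
  · rintro ⟨H, hH⟩
    refine ⟨⟨⟨(H.map (AddMonoidHom.fst G K), H.goursatSnd), ?_⟩, gPhi H⟩, ?_⟩
    · rw [← card_triSubgroup _ _ (gPhi H), triSubgroup_gPhi]; exact hH
    · exact Subtype.ext (triSubgroup_gPhi H)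

end Goursat

section ZModFacts

/-- The kernel of multiplication by `i` on `ZMod b`. -/
def zker (b i : ℕ) : AddSubgroup (ZMod b) := (AddMonoidHom.mulLeft ((i : ℕ) : ZMod b)).ker

lemma mem_zker {b i : ℕ} {x : ZMod b} : x ∈ zker b i ↔ (i : ZMod b) * x = 0 := Iff.rfl

lemma card_zker {b : ℕ} (hb : 0 < b) (i : ℕ) : Nat.card (zker b i) = Nat.gcd b i := by
  haveI : NeZero b := ⟨hb.ne'⟩
  have hr : (AddMonoidHom.mulLeft ((i : ℕ) : ZMod b)).range
      = AddSubgroup.zmultiples ((i : ℕ) : ZMod b) := by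
    ext x
    simp only [AddMonoidHom.mem_range, AddSubgroup.mem_zmultiples_iff,
      AddMonoidHom.coe_mulLeft, zsmul_eq_mul]
    constructor
    · rintro ⟨y, rfl⟩
      refine ⟨(y.val : ℤ), ?_⟩
      push_cast
      rw [ZMod.natCast_val, ZMod.cast_id]
      exact mul_comm _ _
    · rintro ⟨k, rfl⟩
      exact ⟨(k : ZMod b), mul_comm _ _⟩
  have hrange : Nat.card (AddMonoidHom.mulLeft ((i : ℕ) : ZMod b)).range = b / Nat.gcd b i := by
    rw [hr, Nat.card_zmultiples, ZMod.addOrderOf_coe i hb.ne']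
  have h1 : b = Nat.card (ZMod b ⧸ zker b i) * Nat.card (zker b i) := by
    have := AddSubgroup.card_eq_card_quotient_mul_card_addSubgroup (zker b i)
    rwa [Nat.card_zmod] at this
  have h2 : Nat.card (ZMod b ⧸ zker b i) = b / Nat.gcd b i := by
    rw [← hrange]
    exact Nat.card_congr (QuotientAddGroup.quotientKerEquivRange _).toEquiv
  rw [h2] at h1
  have hg : Nat.gcd b i ∣ b := Nat.gcd_dvd_left b i
  have hgpos : 0 < Nat.gcd b i := Nat.gcd_pos_of_pos_left i hb
  have hq : 0 < b / Nat.gcd b i := Nat.div_pos (Nat.le_of_dvd hb hg) hgpos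
  exact (Nat.eq_of_mul_eq_mul_left hq (by rw [← h1, Nat.div_mul_cancel hg])).symm

lemma eq_zker {m : ℕ} (hm : 0 < m) (A : AddSubgroup (ZMod m)) : A = zker m (Nat.card A) := by
  haveI : NeZero m := ⟨hm.ne'⟩
  have hdvd : Nat.card A ∣ m := by
    have := AddSubgroup.card_addSubgroup_dvd_card A
    rwa [Nat.card_zmod] at this
  have hle : A ≤ zker m (Nat.card A) := by
    intro x hx
    have h0 : Nat.card A • (⟨x, hx⟩ : A) = 0 := card_nsmul_eq_zero'
    have : Nat.card A • x = 0 := congrArg Subtype.val h0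
    rwa [nsmul_eq_mul] at this
  exact AddSubgroup.eq_of_le_of_card_ge hle
    (le_of_eq (by rw [card_zker hm, Nat.gcd_eq_right hdvd]))

lemma card_zker_of_dvd {m : ℕ} (hm : 0 < m) {i : ℕ} (hi : i ∣ m) :
    Nat.card (zker m i) = i := by
  rw [card_zker hm, Nat.gcd_eq_right hi]

lemma card_quot {n : ℕ} (hn : 0 < n) (N : AddSubgroup (ZMod n)) :
    Nat.card (ZMod n ⧸ N) = n / Nat.card N := by
  haveI : NeZero n := ⟨hn.ne'⟩
  have h1 : n = Nat.card (ZMod n ⧸ N) * Nat.card N := by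
    have := AddSubgroup.card_eq_card_quotient_mul_card_addSubgroup N
    rwa [Nat.card_zmod] at this
  have h2 : 0 < Nat.card N := Nat.card_pos
  exact (Nat.div_eq_of_eq_mul_left h2 h1).symm

/-- The number of homomorphisms between finite cyclic groups. -/
lemma card_hom_cyclic_s12 (A B : Type*) [AddCommGroup A] [AddCommGroup B] [Finite A] [Finite B]
    [IsAddCyclic A] [IsAddCyclic B] :
    Nat.card (A →+ B) = Nat.gcd (Nat.card A) (Nat.card B) := by
  classical
  set a := Nat.card A with ha
  set b := Nat.card B with hb
  haveI : NeZero b := ⟨Nat.card_pos.ne'⟩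
  let eA : ZMod a ≃+ A := zmodAddCyclicAddEquiv inferInstance
  let eB : B ≃+ ZMod b := (zmodAddCyclicAddEquiv inferInstance).symm
  have e1 : (A →+ B) ≃ (ZMod a →+ B) :=
    { toFun := fun φ => φ.comp eA.toAddMonoidHom
      invFun := fun ψ => ψ.comp eA.symm.toAddMonoidHom
      left_inv := fun φ => by ext x; simp
      right_inv := fun ψ => by ext x; simp }
  have e2 : (ZMod a →+ B) ≃ {f : ℤ →+ B // f a = 0} := (ZMod.lift a).symm
  have e3 : {f : ℤ →+ B // f ((a : ℕ) : ℤ) = 0} ≃ {x : B // (a : ℤ) • x = 0} :=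
    { toFun := fun f => ⟨f.1 1, by
        have h : f.1 ((a : ℤ) • (1 : ℤ)) = 0 := by
          rw [show (a : ℤ) • (1 : ℤ) = ((a : ℕ) : ℤ) by simp]
          exact f.2
        rw [map_zsmul] at h
        exact h⟩
      invFun := fun x => ⟨zmultiplesHom B x.1, by
        rw [zmultiplesHom_apply]
        exact x.2⟩
      left_inv := fun f => Subtype.ext (AddMonoidHom.ext_int (by
        simp [zmultiplesHom_apply]))
      right_inv := fun x => Subtype.ext (by simp [zmultiplesHom_apply]) }
  have e4 : {x : B // (a : ℤ) • x = 0} ≃ {x : ZMod b // (a : ℤ) • x = 0} :=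
    eB.toEquiv.subtypeEquiv (fun x => by
      constructor
      · intro h
        show (a : ℤ) • eB x = 0
        rw [← map_zsmul, h, map_zero]
      · intro h
        have h' : eB ((a : ℤ) • x) = 0 := by
          rw [map_zsmul]; exact h
        simpa using EmbeddingLike.map_eq_zero_iff.mp h')
  have e5 : {x : ZMod b // (a : ℤ) • x = 0} ≃ zker b a :=
    Equiv.subtypeEquivRight (fun x => by
      rw [natCast_zsmul, nsmul_eq_mul]
      exact Iff.rfl)
  rw [Nat.card_congr (((e1.trans e2).trans e3).trans (e4.trans e5)),
    card_zker Nat.card_pos, Nat.gcd_comm]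

end ZModFacts

theorem subgroup_count_of_order (m n δ : ℕ) (hm : 0 < m) (hn : 0 < n) (hδ : δ ∣ m * n) :
    Nat.card {H : AddSubgroup (ZMod m × ZMod n) // Nat.card H = δ} =
      ∑ ij ∈ ((Nat.gcd m δ).divisors ×ˢ (Nat.gcd n δ).divisors).filter
          (fun ij => δ ∣ ij.1 * ij.2),
        Nat.totient (ij.1 * ij.2 / δ) := by
  classical
  haveI : NeZero m := ⟨hm.ne'⟩
  haveI : NeZero n := ⟨hn.ne'⟩
  have hδ0 : 0 < δ := Nat.pos_of_dvd_of_pos hδ (Nat.mul_pos hm hn)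
  -- Step 1: Goursat-type parametrization
  rw [card_subgroup_count δ]
  -- Step 2: turn the sigma-type cardinality into a finset sum
  haveI : ∀ (A' : AddSubgroup (ZMod m)) (N' : AddSubgroup (ZMod n)),
      Finite (A' →+ ZMod n ⧸ N') := fun A' N' =>
    Finite.of_injective _ DFunLike.coe_injective
  haveI : Fintype {p : AddSubgroup (ZMod m) × AddSubgroup (ZMod n) //
      Nat.card p.1 * Nat.card p.2 = δ} := Fintype.ofFinite _
  haveI : ∀ p : {p : AddSubgroup (ZMod m) × AddSubgroup (ZMod n) //
      Nat.card p.1 * Nat.card p.2 = δ},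
      Fintype ((p : AddSubgroup (ZMod m) × AddSubgroup (ZMod n)).1 →+
        ZMod n ⧸ (p : AddSubgroup (ZMod m) × AddSubgroup (ZMod n)).2) := fun p =>
    Fintype.ofFinite _
  rw [Nat.card_eq_fintype_card, Fintype.card_sigma]
  -- value of each fiber
  have hval : ∀ p : {p : AddSubgroup (ZMod m) × AddSubgroup (ZMod n) //
      Nat.card p.1 * Nat.card p.2 = δ},
      Fintype.card ((p : AddSubgroup (ZMod m) × AddSubgroup (ZMod n)).1 →+
        ZMod n ⧸ (p : AddSubgroup (ZMod m) × AddSubgroup (ZMod n)).2)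
        = Nat.gcd (Nat.card (p : AddSubgroup (ZMod m) × AddSubgroup (ZMod n)).1)
            (n / Nat.card (p : AddSubgroup (ZMod m) × AddSubgroup (ZMod n)).2) := by
    rintro ⟨⟨A, N⟩, hp⟩
    haveI : IsAddCyclic (ZMod n ⧸ N) :=
      isAddCyclic_of_surjective (QuotientAddGroup.mk' N) (QuotientAddGroup.mk'_surjective N)
    rw [← Nat.card_eq_fintype_card, card_hom_cyclic_s12, card_quot hn]
  simp_rw [hval]
  -- Step 3: sum over subtype = sum over filtered universe
  rw [← Finset.sum_subtype (Finset.univ.filter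
      (fun p : AddSubgroup (ZMod m) × AddSubgroup (ZMod n) =>
        Nat.card p.1 * Nat.card p.2 = δ))
      (fun p => by simp) (fun p => Nat.gcd (Nat.card p.1) (n / Nat.card p.2))]
  -- Step 4: reindex by cardinalities
  have step4 :
      ∑ p ∈ Finset.univ.filter (fun p : AddSubgroup (ZMod m) × AddSubgroup (ZMod n) =>
          Nat.card p.1 * Nat.card p.2 = δ), Nat.gcd (Nat.card p.1) (n / Nat.card p.2)
        = ∑ q ∈ (m.divisors ×ˢ n.divisors).filter (fun q => q.1 * q.2 = δ),
            Nat.gcd q.1 (n / q.2) := by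
    refine Finset.sum_nbij' (fun p => ((Nat.card p.1 : ℕ), (Nat.card p.2 : ℕ)))
      (fun q => (zker m q.1, zker n q.2)) ?_ ?_ ?_ ?_ ?_
    · rintro ⟨A, N⟩ hp
      simp only [Finset.mem_filter, Finset.mem_univ, true_and] at hp ⊢
      rw [Finset.mem_product]
      refine ⟨⟨?_, ?_⟩, hp⟩
      · rw [Nat.mem_divisors]
        have := AddSubgroup.card_addSubgroup_dvd_card A
        rw [Nat.card_zmod] at this
        exact ⟨this, hm.ne'⟩
      · rw [Nat.mem_divisors]
        have := AddSubgroup.card_addSubgroup_dvd_card N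
        rw [Nat.card_zmod] at this
        exact ⟨this, hn.ne'⟩
    · rintro ⟨i, e⟩ hq
      simp only [Finset.mem_filter, Finset.mem_product, Nat.mem_divisors] at hq
      simp only [Finset.mem_filter, Finset.mem_univ, true_and]
      rw [card_zker_of_dvd hm hq.1.1.1, card_zker_of_dvd hn hq.1.2.1]
      exact hq.2
    · rintro ⟨A, N⟩ hp
      simp only [Prod.mk.injEq]
      exact ⟨(eq_zker hm A).symm, (eq_zker hn N).symm⟩
    · rintro ⟨i, e⟩ hq
      simp only [Finset.mem_filter, Finset.mem_product, Nat.mem_divisors] at hq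
      simp only [Prod.mk.injEq]
      exact ⟨card_zker_of_dvd hm hq.1.1.1, card_zker_of_dvd hn hq.1.2.1⟩
    · rintro ⟨A, N⟩ hp
      rfl

  rw [step4]
  -- Step 5: pure number theory
  have key : ∀ q ∈ (m.divisors ×ˢ n.divisors).filter (fun q => q.1 * q.2 = δ),
      Nat.gcd q.1 (n / q.2) = ∑ d ∈ (Nat.gcd q.1 (n / q.2)).divisors, Nat.totient d :=
    fun q _ => (Nat.sum_totient _).symm
  rw [Finset.sum_congr rfl key, Finset.sum_sigma']
  refine Finset.sum_nbij' (i := fun x => (x.1.1, x.2 * x.1.2))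
    (j := fun ij => ⟨(ij.1, δ / ij.1), ij.1 * ij.2 / δ⟩) ?_ ?_ ?_ ?_ ?_
  · -- hi : membership forward
    rintro ⟨⟨i, e⟩, d⟩ hx
    simp only [Finset.mem_sigma, Finset.mem_filter, Finset.mem_product, Nat.mem_divisors] at hx
    obtain ⟨⟨⟨⟨him, -⟩, hen, -⟩, hie⟩, hd, -⟩ := hx
    obtain ⟨hdi, hdne⟩ := (Nat.dvd_gcd_iff).mp hd
    simp only [Finset.mem_filter, Finset.mem_product, Nat.mem_divisors]
    have hde : d * e ∣ n := by
      have : d * e ∣ (n / e) * e := mul_dvd_mul_right hdne e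
      rwa [Nat.div_mul_cancel hen] at this
    refine ⟨⟨⟨Nat.dvd_gcd him ?_, ?_⟩, ⟨Nat.dvd_gcd hde ?_, ?_⟩⟩, ?_⟩
    · exact hie ▸ dvd_mul_right i e
    · exact Nat.gcd_ne_zero_left hm.ne'
    · exact hie ▸ mul_dvd_mul_right hdi e
    · exact Nat.gcd_ne_zero_left hn.ne'
    · rw [show i * (d * e) = d * (i * e) by ring, hie]
      exact dvd_mul_left δ d
  · -- hj : membership backward
    rintro ⟨i, j⟩ hij
    simp only [Finset.mem_filter, Finset.mem_product, Nat.mem_divisors] at hij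
    obtain ⟨⟨⟨hi, -⟩, hj', -⟩, hdvd⟩ := hij
    obtain ⟨him, hiδ⟩ := Nat.dvd_gcd_iff.mp hi
    obtain ⟨hjn, hjδ⟩ := Nat.dvd_gcd_iff.mp hj'
    have hipos : 0 < i := Nat.pos_of_dvd_of_pos hiδ hδ0
    have he : i * (δ / i) = δ := Nat.mul_div_cancel' hiδ
    have heδ : δ / i ∣ j := by
      have h1 : i * (δ / i) ∣ i * j := by rw [he]; exact hdvd
      exact (mul_dvd_mul_iff_left hipos.ne').mp h1
    simp only [Finset.mem_sigma, Finset.mem_filter, Finset.mem_product, Nat.mem_divisors]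
    have hen : δ / i ∣ n := heδ.trans hjn
    obtain ⟨c, hc⟩ := hdvd
    have hd' : i * j / δ = c := by rw [hc, Nat.mul_div_cancel_left c hδ0]
    have hci : c ∣ i := by
      have h1 : δ * c ∣ δ * i := by
        rw [← hc, mul_comm δ i]
        exact mul_dvd_mul_left i hjδ
      exact (mul_dvd_mul_iff_left hδ0.ne').mp h1
    have hce : (δ / i) * c ∣ n := by
      have h2 : i * ((δ / i) * c) ∣ i * n := by
        rw [show i * ((δ / i) * c) = i * (δ / i) * c by ring, he, ← hc]
        exact mul_dvd_mul_left i hjn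
      exact (mul_dvd_mul_iff_left hipos.ne').mp h2
    refine ⟨⟨⟨⟨him, hm.ne'⟩, hen, hn.ne'⟩, he⟩, ?_, ?_⟩
    · rw [hd']
      refine Nat.dvd_gcd hci ?_
      exact (Nat.dvd_div_iff_mul_dvd hen).mpr hce
    · exact Nat.gcd_ne_zero_left hipos.ne'
  · -- left_inv
    rintro ⟨⟨i, e⟩, d⟩ hx
    simp only [Finset.mem_sigma, Finset.mem_filter, Finset.mem_product, Nat.mem_divisors] at hx
    obtain ⟨⟨⟨⟨him, -⟩, ⟨hen, -⟩⟩, hie⟩, hd, -⟩ := hx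
    obtain ⟨hdi, hdne⟩ := Nat.dvd_gcd_iff.mp hd
    have hipos : 0 < i := by
      rcases Nat.eq_zero_or_pos i with h | h
      · subst h; simp at hie; omega
      · exact h
    have h1 : δ / i = e := by rw [← hie, Nat.mul_div_cancel_left e hipos]
    have h2 : i * (d * e) / δ = d := by
      rw [show i * (d * e) = d * (i * e) by ring, hie, Nat.mul_div_cancel _ hδ0]
    simp [h1, h2]
  · -- right_inv
    rintro ⟨i, j⟩ hij
    simp only [Finset.mem_filter, Finset.mem_product, Nat.mem_divisors] at hij
    obtain ⟨⟨⟨hi, -⟩, hj', -⟩, hdvd⟩ := hij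
    obtain ⟨him, hiδ⟩ := Nat.dvd_gcd_iff.mp hi
    have hipos : 0 < i := Nat.pos_of_dvd_of_pos hiδ hδ0
    have h1 : i * j / δ * (δ / i) = j := by
      obtain ⟨c, hc⟩ := hdvd
      rw [hc, Nat.mul_div_cancel_left c hδ0]
      obtain ⟨e, he⟩ := hiδ
      rw [he, Nat.mul_div_cancel_left e hipos]
      -- i * j = i * e * c  ⇒ j = e * c
      have : j = e * c := by
        have := hc
        rw [he] at this
        have h2 : i * j = i * (e * c) := by rw [this]; ring
        exact Nat.eq_of_mul_eq_mul_left hipos h2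
      rw [this, mul_comm]
    simp [h1]
  · -- values agree
    rintro ⟨⟨i, e⟩, d⟩ hx
    simp only [Finset.mem_sigma, Finset.mem_filter, Finset.mem_product, Nat.mem_divisors] at hx
    obtain ⟨⟨⟨⟨him, -⟩, ⟨hen, -⟩⟩, hie⟩, hd, -⟩ := hx
    have h2 : i * (d * e) / δ = d := by
      rw [show i * (d * e) = d * (i * e) by ring, hie, Nat.mul_div_cancel _ hδ0]
    rw [h2]
end
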